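/- Let d ≥ 1 and p_1, …, p_d ∈ (0,1), and set μ = p_1 + ⋯ + p_d. In anisotropic oriented Bernoulli percolation on ℤ^d, sup_m 𝔼[W_m²] < ∞ if and only if ∑_{n=1}^∞ a_n < ∞. -/

import Mathlib

open MeasureTheory ProbabilityTheory

/-- The `i`-th standard basis vector of `ℤ^d`. -/
def stdBasis (d : ℕ) (i : Fin d) : Fin d → ℤ := fun j => if j = i then 1 else 0

/-- A percolation configuration: each oriented edge `⟨x, x + e i⟩`, encoded as the pair
`(x, i)`, is either open (`true`) or closed (`false`). -/
abbrev Config (d : ℕ) := ((Fin d → ℤ) × Fin d) → Bool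

/-- The position after `j` steps of the oriented path starting at the origin whose
sequence of step directions is `γ`. -/
def pathPos (d : ℕ) {n : ℕ} (γ : Fin n → Fin d) (j : ℕ) : Fin d → ℤ :=
  ∑ t ∈ Finset.univ.filter (fun t : Fin n => (t : ℕ) < j), stdBasis d (γ t)

/-- The oriented path with step directions `γ` starting at the origin is open in the
configuration `ω`: each of its oriented edges is open. -/
def pathOpen (d : ℕ) {n : ℕ} (ω : Config d) (γ : Fin n → Fin d) : Prop :=
  ∀ j : Fin n, ω (pathPos d γ (j : ℕ), γ j) = true

/-- The open cluster of the origin: all vertices reachable from `0` by an open oriented path. -/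
def cluster (d : ℕ) (ω : Config d) : Set (Fin d → ℤ) :=
  {x | ∃ (n : ℕ) (γ : Fin n → Fin d), pathOpen d ω γ ∧ pathPos d γ n = x}

/-- The set of oriented edges used by an oriented path with step directions `γ`. -/
noncomputable def pathEdges (d : ℕ) {n : ℕ} (γ : Fin n → Fin d) :
    Finset ((Fin d → ℤ) × Fin d) :=
  Finset.image (fun j : Fin n => (pathPos d γ (j : ℕ), γ j)) Finset.univ

/-- `ℙ(γ₁, γ₂ open)`: the product, over the distinct oriented edges used by `γ₁` or `γ₂`,
of the probability `p i` of each edge (an edge in direction `e i` contributes `p i`). -/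
noncomputable def pairProb (d : ℕ) (p : Fin d → ℝ) {n : ℕ} (γ₁ γ₂ : Fin n → Fin d) : ℝ :=
  ∏ e ∈ pathEdges d γ₁ ∪ pathEdges d γ₂, p e.2

/-- `a n = μ^{-2n} ∑_{(γ₁,γ₂) ∈ 𝒞_n², f(γ₁)=f(γ₂)} ℙ(γ₁, γ₂ open)`. -/
noncomputable def aSeq (d : ℕ) (p : Fin d → ℝ) (n : ℕ) : ℝ :=
  (∑ gg ∈ Finset.univ.filter
      (fun gg : (Fin n → Fin d) × (Fin n → Fin d) => pathPos d gg.1 n = pathPos d gg.2 n),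
    pairProb d p gg.1 gg.2) / (∑ i, p i) ^ (2 * n)

open Classical in
/-- `b m = μ^{-2m} ∑_{(γ₁,γ₂) ∈ A_m} ℙ(γ₁, γ₂ open)`, where `A_m` is the set of pairs of
paths of length `m` whose intermediate vertices are everywhere distinct and whose final
vertices coincide. -/
noncomputable def bSeq (d : ℕ) (p : Fin d → ℝ) (m : ℕ) : ℝ :=
  (∑ gg ∈ Finset.univ.filter
      (fun gg : (Fin m → Fin d) × (Fin m → Fin d) =>
        (∀ i ∈ Finset.Ioo 0 m, pathPos d gg.1 i ≠ pathPos d gg.2 i) ∧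
          pathPos d gg.1 m = pathPos d gg.2 m),
    pairProb d p gg.1 gg.2) / (∑ i, p i) ^ (2 * m)

/-- `Xcount d n ω` is the number of open oriented paths of length `n` starting at the
origin in the configuration `ω`. -/
noncomputable def Xcount (d n : ℕ) (ω : Config d) : ℕ :=
  Nat.card {γ : Fin n → Fin d // pathOpen d ω γ}

section Comb

def level {d : ℕ} (x : Fin d → ℤ) : ℤ := ∑ j, x j

lemma level_stdBasis (d : ℕ) (i : Fin d) : level (stdBasis d i) = 1 := by
  simp [level, stdBasis]

lemma card_filter_lt (n j : ℕ) (hj : j ≤ n) :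
    (Finset.univ.filter fun t : Fin n => (t : ℕ) < j).card = j := by
  have h : ∀ m ∈ Finset.range j, m < n := fun m hm =>
    lt_of_lt_of_le (Finset.mem_range.mp hm) hj
  have : (Finset.univ.filter fun t : Fin n => (t : ℕ) < j) = Finset.attachFin (Finset.range j) h := by
    ext t; simp [Finset.mem_attachFin]
  rw [this, Finset.card_attachFin, Finset.card_range]

lemma level_pathPos {d n : ℕ} (γ : Fin n → Fin d) {j : ℕ} (hj : j ≤ n) :
    level (pathPos d γ j) = (j : ℤ) := by
  unfold level pathPos
  simp only [Finset.sum_apply]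
  rw [Finset.sum_comm]
  have : ∀ t : Fin n, ∑ j' : Fin d, stdBasis d (γ t) j' = 1 := fun t => level_stdBasis d (γ t)
  rw [Finset.sum_congr rfl (fun t _ => this t), Finset.sum_const, card_filter_lt n j hj]
  simp

lemma pathPos_snoc {d n : ℕ} (γ : Fin n → Fin d) (i : Fin d) (j : ℕ) :
    pathPos d (Fin.snoc γ i : Fin (n+1) → Fin d) j
      = pathPos d γ j + if n < j then stdBasis d i else 0 := by
  unfold pathPos
  rw [Finset.sum_filter, Finset.sum_filter, Fin.sum_univ_castSucc]
  simp only [Fin.coe_castSucc, Fin.snoc_castSucc, Fin.val_last, Fin.snoc_last]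

lemma mem_pathEdges_level {d n : ℕ} {γ : Fin n → Fin d} {e : (Fin d → ℤ) × Fin d}
    (he : e ∈ pathEdges d γ) : level e.1 < (n : ℤ) := by
  obtain ⟨j, -, rfl⟩ := Finset.mem_image.mp he
  rw [level_pathPos γ (le_of_lt j.isLt)]
  exact_mod_cast j.isLt

lemma pathEdges_snoc {d n : ℕ} (γ : Fin n → Fin d) (i : Fin d) :
    pathEdges d (Fin.snoc γ i : Fin (n+1) → Fin d)
      = insert (pathPos d γ n, i) (pathEdges d γ) := by
  have hlast : (pathPos d (Fin.snoc γ i : Fin (n+1) → Fin d) ((Fin.last n) : ℕ),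
      (Fin.snoc γ i : Fin (n+1) → Fin d) (Fin.last n)) = (pathPos d γ n, i) := by
    rw [Fin.val_last, pathPos_snoc, Fin.snoc_last, if_neg (lt_irrefl n), add_zero]
  have hcast : ∀ s : Fin n, (pathPos d (Fin.snoc γ i : Fin (n+1) → Fin d) ((s.castSucc : Fin (n+1)) : ℕ),
      (Fin.snoc γ i : Fin (n+1) → Fin d) s.castSucc) = (pathPos d γ (s : ℕ), γ s) := by
    intro s
    rw [Fin.coe_castSucc, Fin.snoc_castSucc, pathPos_snoc,
      if_neg (Nat.not_lt.mpr s.isLt.le), add_zero]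
  ext e
  simp only [pathEdges, Finset.mem_image, Finset.mem_insert, Finset.mem_univ, true_and]
  constructor
  · rintro ⟨j, rfl⟩
    induction j using Fin.lastCases with
    | last => left; exact hlast.symm ▸ hlast
    | cast s => right; exact ⟨s, (hcast s).symm⟩
  · rintro (rfl | ⟨s, rfl⟩)
    · exact ⟨Fin.last n, hlast⟩
    · exact ⟨s.castSucc, hcast s⟩

end Comb

section Comb2

variable {d : ℕ} (p : Fin d → ℝ)

lemma pairProb_snoc {n : ℕ} (γ₁ γ₂ : Fin n → Fin d) (i j : Fin d) :
    pairProb d p (Fin.snoc γ₁ i) (Fin.snoc γ₂ j)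
      = pairProb d p γ₁ γ₂ *
        (if (pathPos d γ₁ n, i) = (pathPos d γ₂ n, j) then p i else p i * p j) := by
  classical
  unfold pairProb
  rw [pathEdges_snoc, pathEdges_snoc]
  set e₁ : (Fin d → ℤ) × Fin d := (pathPos d γ₁ n, i) with he₁
  set e₂ : (Fin d → ℤ) × Fin d := (pathPos d γ₂ n, j) with he₂
  set E := pathEdges d γ₁ ∪ pathEdges d γ₂ with hE
  have hmem : ∀ e : (Fin d → ℤ) × Fin d, level e.1 = (n : ℤ) → e ∉ E := by
    intro e hl hmemE
    rcases Finset.mem_union.mp hmemE with h | h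
    · exact absurd (hl ▸ mem_pathEdges_level h) (lt_irrefl _)
    · exact absurd (hl ▸ mem_pathEdges_level h) (lt_irrefl _)
  have h₁ : e₁ ∉ E := hmem e₁ (level_pathPos γ₁ le_rfl)
  have h₂ : e₂ ∉ E := hmem e₂ (level_pathPos γ₂ le_rfl)
  have hins : insert e₁ (pathEdges d γ₁) ∪ insert e₂ (pathEdges d γ₂)
      = insert e₁ (insert e₂ E) := by
    ext x
    simp only [Finset.mem_union, Finset.mem_insert, hE]
    tauto
  rw [hins]
  by_cases h : e₁ = e₂
  · rw [if_pos h, h, Finset.insert_idem, Finset.prod_insert h₂]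
    have : e₂.2 = i := by rw [← h]
    rw [this, mul_comm]
  · rw [if_neg h,
      Finset.prod_insert (by simp only [Finset.mem_insert]; push_neg; exact ⟨h, h₁⟩),
      Finset.prod_insert h₂]
    show p i * (p j * ∏ e ∈ E, p e.2) = _
    ring

open Classical in
/-- the non-normalized second moment `∑ pairs ℙ(γ₁,γ₂ open)`. -/
noncomputable def Tsum (d : ℕ) (p : Fin d → ℝ) (n : ℕ) : ℝ :=
  ∑ gg : (Fin n → Fin d) × (Fin n → Fin d), pairProb d p gg.1 gg.2

/-- the non-normalized `aSeq` numerator. -/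
noncomputable def Usum (d : ℕ) (p : Fin d → ℝ) (n : ℕ) : ℝ :=
  ∑ gg ∈ Finset.univ.filter
      (fun gg : (Fin n → Fin d) × (Fin n → Fin d) => pathPos d gg.1 n = pathPos d gg.2 n),
    pairProb d p gg.1 gg.2

lemma aSeq_eq_Usum (n : ℕ) : aSeq d p n = Usum d p n / (∑ i, p i) ^ (2 * n) := rfl

lemma Tsum_zero : Tsum d p 0 = 1 := by
  have h : ∀ gg : (Fin 0 → Fin d) × (Fin 0 → Fin d), pairProb d p gg.1 gg.2 = 1 := by
    intro gg
    unfold pairProb pathEdges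
    simp
  rw [Tsum, Finset.sum_congr rfl (fun gg _ => h gg), Finset.sum_const, Finset.card_univ]
  simp

end Comb2

section Comb3

variable {d : ℕ} (p : Fin d → ℝ)

lemma inner_sum_same (x : Fin d → ℤ) :
    ∑ ij : Fin d × Fin d,
        (if ((x, ij.1) : (Fin d → ℤ) × Fin d) = (x, ij.2) then p ij.1 else p ij.1 * p ij.2)
      = (∑ i, p i) ^ 2 + ∑ i, p i * (1 - p i) := by
  have h1 : ∀ i j : Fin d,
      (if ((x, i) : (Fin d → ℤ) × Fin d) = (x, j) then p i else p i * p j)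
        = p i * p j + (if i = j then p i - p i * p i else 0) := by
    intro i j
    have hc : (((x, i) : (Fin d → ℤ) × Fin d) = (x, j)) ↔ i = j := by
      simp [Prod.ext_iff]
    rw [if_congr hc rfl rfl]
    by_cases h : i = j
    · subst h; rw [if_pos rfl, if_pos rfl]; ring
    · rw [if_neg h, if_neg h]; ring
  rw [Fintype.sum_prod_type]
  rw [Finset.sum_congr rfl fun i _ => Finset.sum_congr rfl fun j _ => h1 i j]
  simp only [Finset.sum_add_distrib, Finset.sum_ite_eq, Finset.mem_univ, if_true]
  rw [← Finset.sum_mul_sum]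
  congr 1
  · rw [sq]
  · exact Finset.sum_congr rfl fun i _ => by ring

lemma inner_sum_ne {x₁ x₂ : Fin d → ℤ} (hne : x₁ ≠ x₂) :
    ∑ ij : Fin d × Fin d,
        (if ((x₁, ij.1) : (Fin d → ℤ) × Fin d) = (x₂, ij.2) then p ij.1 else p ij.1 * p ij.2)
      = (∑ i, p i) ^ 2 := by
  have h1 : ∀ ij : Fin d × Fin d,
      (if ((x₁, ij.1) : (Fin d → ℤ) × Fin d) = (x₂, ij.2) then p ij.1 else p ij.1 * p ij.2)
        = p ij.1 * p ij.2 := by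
    intro ij
    rw [if_neg]
    intro h
    exact hne (congrArg Prod.fst h)
  rw [Finset.sum_congr rfl fun ij _ => h1 ij, Fintype.sum_prod_type, ← Finset.sum_mul_sum, sq]

/-- `Fin.snoc` on pairs of tuples, as an equivalence. -/
def snocPairEquiv (d n : ℕ) :
    (((Fin n → Fin d) × (Fin n → Fin d)) × (Fin d × Fin d))
      ≃ ((Fin (n+1) → Fin d) × (Fin (n+1) → Fin d)) where
  toFun x := (Fin.snoc x.1.1 x.2.1, Fin.snoc x.1.2 x.2.2)
  invFun y := ((Fin.init y.1, Fin.init y.2), (y.1 (Fin.last n), y.2 (Fin.last n)))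
  left_inv x := by
    refine Prod.ext (Prod.ext ?_ ?_) (Prod.ext ?_ ?_) <;>
      simp [Fin.init_snoc, Fin.snoc_last]
  right_inv y := by
    refine Prod.ext ?_ ?_ <;> simp [Fin.snoc_init_self]

lemma Tsum_succ (n : ℕ) :
    Tsum d p (n + 1)
      = (∑ i, p i) ^ 2 * Tsum d p n + (∑ i, p i * (1 - p i)) * Usum d p n := by
  have hre : Tsum d p (n + 1)
      = ∑ x : ((Fin n → Fin d) × (Fin n → Fin d)) × (Fin d × Fin d),
          pairProb d p (Fin.snoc x.1.1 x.2.1) (Fin.snoc x.1.2 x.2.2) :=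
    (Fintype.sum_equiv (snocPairEquiv d n)
      (fun x => pairProb d p (Fin.snoc x.1.1 x.2.1) (Fin.snoc x.1.2 x.2.2))
      (fun gg => pairProb d p gg.1 gg.2) (fun x => rfl)).symm
  rw [hre, Fintype.sum_prod_type]
  have hps : ∀ gg : (Fin n → Fin d) × (Fin n → Fin d),
      ∑ ij : Fin d × Fin d, pairProb d p (Fin.snoc gg.1 ij.1) (Fin.snoc gg.2 ij.2)
        = pairProb d p gg.1 gg.2 *
            (if pathPos d gg.1 n = pathPos d gg.2 n
              then (∑ i, p i) ^ 2 + ∑ i, p i * (1 - p i) else (∑ i, p i) ^ 2) := by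
    intro gg
    rw [Finset.sum_congr rfl fun ij _ => pairProb_snoc p gg.1 gg.2 ij.1 ij.2, ← Finset.mul_sum]
    by_cases h : pathPos d gg.1 n = pathPos d gg.2 n
    · rw [if_pos h]
      congr 1
      rw [← h]
      exact inner_sum_same p (pathPos d gg.1 n)
    · rw [if_neg h]
      congr 1
      exact inner_sum_ne p h
  rw [Finset.sum_congr rfl fun gg _ => hps gg]
  rw [← Finset.sum_filter_add_sum_filter_not Finset.univ
    (fun gg : (Fin n → Fin d) × (Fin n → Fin d) => pathPos d gg.1 n = pathPos d gg.2 n)]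
  have hA : (∑ gg ∈ Finset.univ.filter
        (fun gg : (Fin n → Fin d) × (Fin n → Fin d) => pathPos d gg.1 n = pathPos d gg.2 n),
        pairProb d p gg.1 gg.2 *
          (if pathPos d gg.1 n = pathPos d gg.2 n
            then (∑ i, p i) ^ 2 + ∑ i, p i * (1 - p i) else (∑ i, p i) ^ 2))
      = Usum d p n * ((∑ i, p i) ^ 2 + ∑ i, p i * (1 - p i)) := by
    rw [Usum, Finset.sum_mul]
    refine Finset.sum_congr rfl fun gg hgg => ?_
    rw [if_pos (Finset.mem_filter.mp hgg).2]
  have hB : (∑ gg ∈ Finset.univ.filter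
        (fun gg : (Fin n → Fin d) × (Fin n → Fin d) => ¬pathPos d gg.1 n = pathPos d gg.2 n),
        pairProb d p gg.1 gg.2 *
          (if pathPos d gg.1 n = pathPos d gg.2 n
            then (∑ i, p i) ^ 2 + ∑ i, p i * (1 - p i) else (∑ i, p i) ^ 2))
      = (∑ gg ∈ Finset.univ.filter
          (fun gg : (Fin n → Fin d) × (Fin n → Fin d) => ¬pathPos d gg.1 n = pathPos d gg.2 n),
          pairProb d p gg.1 gg.2) * (∑ i, p i) ^ 2 := by
    rw [Finset.sum_mul]
    refine Finset.sum_congr rfl fun gg hgg => ?_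
    rw [if_neg (Finset.mem_filter.mp hgg).2]
  rw [hA, hB]
  have hT : Usum d p n + (∑ gg ∈ Finset.univ.filter
      (fun gg : (Fin n → Fin d) × (Fin n → Fin d) => ¬pathPos d gg.1 n = pathPos d gg.2 n),
      pairProb d p gg.1 gg.2) = Tsum d p n := by
    rw [Usum, Tsum]
    exact Finset.sum_filter_add_sum_filter_not Finset.univ _ _
  linear_combination ((∑ i, p i) ^ 2) * hT

end Comb3

section Comb4

variable {d : ℕ} {p : Fin d → ℝ}

lemma pairProb_nonneg (hp : ∀ i, 0 ≤ p i) {n : ℕ} (γ₁ γ₂ : Fin n → Fin d) :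
    0 ≤ pairProb d p γ₁ γ₂ :=
  Finset.prod_nonneg fun e _ => hp e.2

lemma Usum_nonneg (hp : ∀ i, 0 ≤ p i) (n : ℕ) : 0 ≤ Usum d p n :=
  Finset.sum_nonneg fun gg _ => pairProb_nonneg hp gg.1 gg.2

lemma Tsum_nonneg (hp : ∀ i, 0 ≤ p i) (n : ℕ) : 0 ≤ Tsum d p n :=
  Finset.sum_nonneg fun gg _ => pairProb_nonneg hp gg.1 gg.2

lemma aSeq_nonneg (hp : ∀ i, 0 ≤ p i) (n : ℕ) : 0 ≤ aSeq d p n := by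
  rw [aSeq_eq_Usum]
  exact div_nonneg (Usum_nonneg hp n) (pow_nonneg (Finset.sum_nonneg fun i _ => hp i) _)

lemma Tsum_div_closed (hμ : (0:ℝ) < ∑ i, p i) (m : ℕ) :
    Tsum d p m / (∑ i, p i) ^ (2 * m)
      = 1 + (∑ i, p i * (1 - p i)) / (∑ i, p i) ^ 2
          * ∑ k ∈ Finset.range m, aSeq d p k := by
  induction m with
  | zero => simp [Tsum_zero]
  | succ m ih =>
    have hne : (∑ i, p i) ^ (2 * m) ≠ 0 := pow_ne_zero _ (ne_of_gt hμ)
    have hne2 : ((∑ i, p i) : ℝ) ≠ 0 := ne_of_gt hμ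
    have hpow : ((∑ i, p i) : ℝ) ^ (2 * (m + 1)) = (∑ i, p i) ^ (2 * m) * (∑ i, p i) ^ 2 := by
      rw [show 2 * (m + 1) = 2 * m + 2 by ring, pow_add]
    have hT : Tsum d p m
        = (1 + (∑ i, p i * (1 - p i)) / (∑ i, p i) ^ 2
            * ∑ k ∈ Finset.range m, aSeq d p k) * (∑ i, p i) ^ (2 * m) := by
      rw [← ih, div_mul_cancel₀ _ hne]
    rw [Tsum_succ, hpow, Finset.sum_range_succ, aSeq_eq_Usum, hT]
    field_simp
    ring

end Comb4

section Prob

open scoped ENNReal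

variable {d : ℕ}

lemma pathOpen_iff_edges {n : ℕ} (ω : Config d) (γ : Fin n → Fin d) :
    pathOpen d ω γ ↔ ∀ e ∈ pathEdges d γ, ω e = true := by
  constructor
  · rintro h e he
    obtain ⟨j, -, rfl⟩ := Finset.mem_image.mp he
    exact h j
  · intro h j
    exact h _ (Finset.mem_image.mpr ⟨j, Finset.mem_univ _, rfl⟩)

lemma measurableSet_pathOpen {n : ℕ} (γ : Fin n → Fin d) :
    MeasurableSet {ω : Config d | pathOpen d ω γ} := by
  have h : {ω : Config d | pathOpen d ω γ}
      = ⋂ j : Fin n, (fun ω : Config d => ω (pathPos d γ (j : ℕ), γ j)) ⁻¹' {true} := by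
    ext ω
    simp [pathOpen, Set.mem_iInter]
  rw [h]
  exact MeasurableSet.iInter fun j =>
    (measurable_pi_apply _) (measurableSet_singleton true)

lemma meas_pair (p : Fin d → ℝ) (hp : ∀ i, 0 ≤ p i)
    (P : Measure (Config d))
    (hindep : iIndepFun (fun e (ω : Config d) => ω e) P)
    (hmarg : ∀ e : (Fin d → ℤ) × Fin d, P {ω : Config d | ω e = true} = ENNReal.ofReal (p e.2))
    {n : ℕ} (γ₁ γ₂ : Fin n → Fin d) :
    P {ω : Config d | pathOpen d ω γ₁ ∧ pathOpen d ω γ₂}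
      = ENNReal.ofReal (pairProb d p γ₁ γ₂) := by
  have hset : {ω : Config d | pathOpen d ω γ₁ ∧ pathOpen d ω γ₂}
      = ⋂ e ∈ (pathEdges d γ₁ ∪ pathEdges d γ₂ : Finset _), {ω : Config d | ω e = true} := by
    ext ω
    simp only [Set.mem_setOf_eq, Set.mem_iInter, pathOpen_iff_edges, Finset.mem_union]
    constructor
    · rintro ⟨h1, h2⟩ e he
      rcases he with h | h
      exacts [h1 e h, h2 e h]
    · intro h
      exact ⟨fun e he => h e (Or.inl he), fun e he => h e (Or.inr he)⟩
  rw [hset,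
    hindep.meas_biInter (S := pathEdges d γ₁ ∪ pathEdges d γ₂)
      (s := fun e => {ω : Config d | ω e = true})
      (fun e _ => ⟨{true}, MeasurableSpace.measurableSet_top, by ext ω; simp⟩)]
  rw [pairProb, ENNReal.ofReal_prod_of_nonneg (fun e _ => hp e.2)]
  exact Finset.prod_congr rfl fun e _ => hmarg e

open Classical in
lemma Xcount_cast {n : ℕ} (ω : Config d) :
    ((Xcount d n ω : ℝ≥0∞))
      = ∑ γ : Fin n → Fin d,
          Set.indicator {ω' : Config d | pathOpen d ω' γ} (fun _ => 1) ω := by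
  have h1 : Xcount d n ω = (Finset.univ.filter fun γ : Fin n → Fin d => pathOpen d ω γ).card := by
    rw [Xcount, Nat.card_eq_fintype_card, Fintype.card_subtype]
  rw [h1, Finset.card_filter]
  push_cast
  refine Finset.sum_congr rfl fun γ _ => ?_
  by_cases h : pathOpen d ω γ <;> simp [h, Set.indicator_apply]

lemma lintegral_Xsq (p : Fin d → ℝ) (hp : ∀ i, 0 ≤ p i)
    (P : Measure (Config d))
    (hindep : iIndepFun (fun e (ω : Config d) => ω e) P)
    (hmarg : ∀ e : (Fin d → ℤ) × Fin d, P {ω : Config d | ω e = true} = ENNReal.ofReal (p e.2))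
    (n : ℕ) :
    ∫⁻ ω, ((Xcount d n ω : ℝ≥0∞)) ^ 2 ∂P = ENNReal.ofReal (Tsum d p n) := by
  have hind : ∀ ω : Config d, ((Xcount d n ω : ℝ≥0∞)) ^ 2
      = ∑ gg : (Fin n → Fin d) × (Fin n → Fin d),
          Set.indicator ({ω' : Config d | pathOpen d ω' gg.1} ∩ {ω' | pathOpen d ω' gg.2})
            (fun _ => 1) ω := by
    intro ω
    rw [Xcount_cast, sq, Finset.sum_mul_sum, Fintype.sum_prod_type]
    refine Finset.sum_congr rfl fun γ₁ _ => Finset.sum_congr rfl fun γ₂ _ => ?_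
    by_cases h1 : pathOpen d ω γ₁ <;> by_cases h2 : pathOpen d ω γ₂ <;>
      simp [Set.indicator_apply, h1, h2]
  calc ∫⁻ ω, ((Xcount d n ω : ℝ≥0∞)) ^ 2 ∂P
      = ∫⁻ ω, ∑ gg : (Fin n → Fin d) × (Fin n → Fin d),
          Set.indicator ({ω' : Config d | pathOpen d ω' gg.1} ∩ {ω' | pathOpen d ω' gg.2})
            (fun _ => 1) ω ∂P := lintegral_congr hind
    _ = ∑ gg : (Fin n → Fin d) × (Fin n → Fin d),
          ∫⁻ ω, Set.indicator ({ω' : Config d | pathOpen d ω' gg.1} ∩ {ω' | pathOpen d ω' gg.2})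
            (fun _ => 1) ω ∂P :=
        lintegral_finset_sum _ fun gg _ =>
          measurable_const.indicator ((measurableSet_pathOpen _).inter (measurableSet_pathOpen _))
    _ = ∑ gg : (Fin n → Fin d) × (Fin n → Fin d), ENNReal.ofReal (pairProb d p gg.1 gg.2) := by
        refine Finset.sum_congr rfl fun gg _ => ?_
        rw [lintegral_indicator_const
          ((measurableSet_pathOpen _).inter (measurableSet_pathOpen _)), one_mul,
          ← Set.setOf_and, meas_pair p hp P hindep hmarg]
    _ = ENNReal.ofReal (Tsum d p n) := by
        rw [Tsum, ENNReal.ofReal_sum_of_nonneg fun gg _ => pairProb_nonneg hp gg.1 gg.2]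

end Prob

open scoped ENNReal in
set_option maxHeartbeats 1000000 in
theorem second_moment_bounded_iff_aSeq_summable
    (d : ℕ) (hd : 1 ≤ d)
    (p : Fin d → ℝ) (hp : ∀ i, p i ∈ Set.Ioo (0 : ℝ) 1)
    (μ : ℝ) (hμ : μ = ∑ i, p i)
    (P : Measure (Config d)) [IsProbabilityMeasure P]
    (hindep : iIndepFun (fun e (ω : Config d) => ω e) P)
    (hmarg : ∀ e : (Fin d → ℤ) × Fin d, P {ω : Config d | ω e = true} = ENNReal.ofReal (p e.2))
    (W : ℕ → Config d → ℝ) (hW : ∀ n ω, W n ω = (Xcount d n ω : ℝ) / μ ^ n) :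
    (⨆ m : ℕ, ∫⁻ ω, ENNReal.ofReal ((W m ω) ^ 2) ∂P) < ⊤ ↔
      (∑' n : ℕ, ENNReal.ofReal (aSeq d p (n + 1))) < ⊤ := by
  subst hμ
  have hppos : ∀ i, 0 ≤ p i := fun i => (hp i).1.le
  have hμpos : (0:ℝ) < ∑ i, p i :=
    Finset.sum_pos (fun i _ => (hp i).1) ⟨⟨0, hd⟩, Finset.mem_univ _⟩
  have hσpos : (0:ℝ) < ∑ i, p i * (1 - p i) :=
    Finset.sum_pos (fun i _ => mul_pos (hp i).1 (by linarith [(hp i).2]))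
      ⟨⟨0, hd⟩, Finset.mem_univ _⟩
  set C : ℝ := (∑ i, p i * (1 - p i)) / (∑ i, p i) ^ 2 with hC
  have hCpos : 0 < C := div_pos hσpos (pow_pos hμpos 2)
  -- measurability of the squared count
  have hmeasX : ∀ m : ℕ, Measurable fun ω : Config d => ((Xcount d m ω : ℝ≥0∞)) ^ 2 := by
    intro m
    have hfe : (fun ω : Config d => ((Xcount d m ω : ℝ≥0∞)))
        = fun ω => ∑ γ : Fin m → Fin d,
            Set.indicator {ω' : Config d | pathOpen d ω' γ} (fun _ => 1) ω := by
      funext ω; exact Xcount_cast ω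
    have : Measurable fun ω : Config d => ((Xcount d m ω : ℝ≥0∞)) := by
      rw [hfe]
      exact Finset.measurable_sum _ fun γ _ =>
        measurable_const.indicator (measurableSet_pathOpen γ)
    exact this.pow_const 2
  -- the second moment identity
  have key : ∀ m : ℕ, ∫⁻ ω, ENNReal.ofReal ((W m ω) ^ 2) ∂P
      = 1 + ENNReal.ofReal C * ∑ k ∈ Finset.range m, ENNReal.ofReal (aSeq d p k) := by
    intro m
    have h1 : ∀ ω : Config d, ENNReal.ofReal ((W m ω) ^ 2)
        = ((Xcount d m ω : ℝ≥0∞)) ^ 2 * ENNReal.ofReal ((((∑ i, p i) ^ m)⁻¹) ^ 2) := by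
      intro ω
      rw [hW m ω, div_pow, div_eq_mul_inv, ← inv_pow]
      rw [ENNReal.ofReal_mul (by positivity), ENNReal.ofReal_pow (Nat.cast_nonneg _),
        ENNReal.ofReal_natCast]
    rw [lintegral_congr h1, lintegral_mul_const _ (hmeasX m),
      lintegral_Xsq p hppos P hindep hmarg m,
      ← ENNReal.ofReal_mul (Tsum_nonneg hppos m)]
    have h2 : Tsum d p m * (((∑ i, p i) ^ m)⁻¹) ^ 2 = Tsum d p m / (∑ i, p i) ^ (2 * m) := by
      rw [div_eq_mul_inv, inv_pow, ← pow_mul, mul_comm m 2]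
    rw [h2, Tsum_div_closed hμpos m, ← hC]
    rw [ENNReal.ofReal_add zero_le_one
      (mul_nonneg hCpos.le (Finset.sum_nonneg fun k _ => aSeq_nonneg hppos k)),
      ENNReal.ofReal_one, ENNReal.ofReal_mul hCpos.le,
      ENNReal.ofReal_sum_of_nonneg fun k _ => aSeq_nonneg hppos k]
  have hC0 : ENNReal.ofReal C ≠ 0 := by
    simp only [ne_eq, ENNReal.ofReal_eq_zero, not_le]
    exact hCpos
  have hCtop : ENNReal.ofReal C ≠ ⊤ := ENNReal.ofReal_ne_top
  -- rewrite the supremum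
  have hsup : (⨆ m : ℕ, ∫⁻ ω, ENNReal.ofReal ((W m ω) ^ 2) ∂P)
      = 1 + ENNReal.ofReal C * ∑' n : ℕ, ENNReal.ofReal (aSeq d p n) := by
    rw [iSup_congr key, ← ENNReal.add_iSup, ← ENNReal.mul_iSup, ENNReal.tsum_eq_iSup_nat]
  rw [hsup]
  have hshift : (∑' n : ℕ, ENNReal.ofReal (aSeq d p n))
      = ENNReal.ofReal (aSeq d p 0) + ∑' n : ℕ, ENNReal.ofReal (aSeq d p (n + 1)) :=
    tsum_eq_zero_add' ENNReal.summable
  constructor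
  · intro h
    have ht : (∑' n : ℕ, ENNReal.ofReal (aSeq d p n)) ≠ ⊤ := by
      intro htop
      rw [htop, ENNReal.mul_top hC0] at h
      simp at h
    rw [hshift] at ht
    exact lt_of_le_of_lt le_add_self (Ne.lt_top ht)
  · intro h
    refine ENNReal.add_lt_top.mpr ⟨ENNReal.one_lt_top, ENNReal.mul_lt_top hCtop.lt_top ?_⟩
    rw [hshift]
    exact ENNReal.add_lt_top.mpr ⟨ENNReal.ofReal_lt_top, h⟩
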